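/- Suppose every cyclic module over a commutative ring R has projective dimension at most 2. Then the global dimension of R is at most 2. -/

import Mathlib

noncomputable section AuslanderAux

open LinearMap

variable {R : Type} [CommRing R]

/-- Descend a linear map through a surjection whose kernel it kills. -/
theorem ausDesc {E A X : Type} [AddCommGroup E] [Module R E] [AddCommGroup A] [Module R A]
    [AddCommGroup X] [Module R X] (τ : E →ₗ[R] A) (hτ : Function.Surjective τ)
    (φ : E →ₗ[R] X) (h : ker τ ≤ ker φ) : ∃ ψ : A →ₗ[R] X, ψ ∘ₗ τ = φ := by
  have hinj : Function.Injective ((ker τ).liftQ τ le_rfl) := by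
    rw [← LinearMap.ker_eq_bot]
    exact Submodule.ker_liftQ_eq_bot _ _ _ le_rfl
  have hsurj : Function.Surjective ((ker τ).liftQ τ le_rfl) := by
    intro a
    obtain ⟨e, he⟩ := hτ a
    exact ⟨Submodule.Quotient.mk e, by simpa using he⟩
  let eqv := LinearEquiv.ofBijective _ ⟨hinj, hsurj⟩
  refine ⟨((ker τ).liftQ φ h) ∘ₗ (eqv.symm : A →ₗ[R] E ⧸ ker τ), ?_⟩
  ext x
  have h1 : eqv.symm (τ x) = Submodule.Quotient.mk x := by
    apply eqv.injective
    rw [eqv.apply_symm_apply]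
    show τ x = (ker τ).liftQ τ le_rfl (Submodule.Quotient.mk x)
    simp
  simp [LinearMap.comp_apply, h1]

/-- `Ext¹(A, B) = 0`, phrased as: every extension of `B` by `A` splits. -/
def Ext1Zero (R : Type) [CommRing R] (A B : Type) [AddCommGroup A] [Module R A]
    [AddCommGroup B] [Module R B] : Prop :=
  ∀ (E : Type) [AddCommGroup E] [Module R E] (ι : B →ₗ[R] E) (τ : E →ₗ[R] A),
    Function.Injective ι → Function.Surjective τ → range ι = ker τ →
    ∃ s : A →ₗ[R] E, τ ∘ₗ s = LinearMap.id

theorem ext1Zero_of_projective {A B : Type} [AddCommGroup A] [Module R A]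
    [AddCommGroup B] [Module R B] (hA : Module.Projective R A) : Ext1Zero R A B := by
  intro E _ _ ι τ _ hτ _
  haveI := hA
  obtain ⟨s, hs⟩ := Module.projective_lifting_property τ LinearMap.id hτ
  exact ⟨s, hs⟩

/-- From a retraction onto the kernel, get a section of the quotient map. -/
theorem sec_of_retr {A B E : Type} [AddCommGroup A] [Module R A] [AddCommGroup B] [Module R B]
    [AddCommGroup E] [Module R E] (ι : B →ₗ[R] E) (τ : E →ₗ[R] A)
    (hτ : Function.Surjective τ) (hr : range ι = ker τ)
    (ρ : E →ₗ[R] B) (hρ : ρ ∘ₗ ι = LinearMap.id) :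
    ∃ s : A →ₗ[R] E, τ ∘ₗ s = LinearMap.id := by
  have hτι : ∀ b, τ (ι b) = 0 := by
    intro b
    have : ι b ∈ ker τ := hr ▸ LinearMap.mem_range_self ι b
    exact this
  have hker : ker τ ≤ ker (LinearMap.id - ι ∘ₗ ρ) := by
    intro x hx
    have hx' : x ∈ range ι := hr ▸ hx
    obtain ⟨b, rfl⟩ := hx'
    have hb : ρ (ι b) = b := LinearMap.congr_fun hρ b
    simp [LinearMap.mem_ker, hb]
  obtain ⟨s, hs⟩ := ausDesc τ hτ (LinearMap.id - ι ∘ₗ ρ) hker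
  refine ⟨s, LinearMap.ext fun a => ?_⟩
  obtain ⟨e, rfl⟩ := hτ a
  have h2 := LinearMap.congr_fun hs e
  simp only [LinearMap.comp_apply, LinearMap.sub_apply, LinearMap.id_apply] at h2 ⊢
  rw [h2, map_sub, hτι, sub_zero]

/-- From a section of the quotient map, get a retraction onto the kernel. -/
theorem retr_of_sec {A B E : Type} [AddCommGroup A] [Module R A] [AddCommGroup B] [Module R B]
    [AddCommGroup E] [Module R E] (ι : B →ₗ[R] E) (τ : E →ₗ[R] A) (hι : Function.Injective ι)
    (hr : range ι = ker τ) (s : A →ₗ[R] E) (hs : τ ∘ₗ s = LinearMap.id) :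
    ∃ ρ : E →ₗ[R] B, ρ ∘ₗ ι = LinearMap.id ∧ ∀ e, ι (ρ e) = e - s (τ e) := by
  have hmem : ∀ e, e - s (τ e) ∈ range ι := by
    intro e
    rw [hr, LinearMap.mem_ker, map_sub]
    have : τ (s (τ e)) = τ e := LinearMap.congr_fun hs (τ e)
    rw [this, sub_self]
  set ρ : E →ₗ[R] B :=
    ((LinearEquiv.ofInjective ι hι).symm : ↥(range ι) →ₗ[R] B) ∘ₗ
      LinearMap.codRestrict (range ι) (LinearMap.id - s ∘ₗ τ) (fun e => hmem e) with hρdef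
  have key : ∀ y : ↥(range ι), ι ((LinearEquiv.ofInjective ι hι).symm y) = (y : E) := by
    intro y
    have h2 := LinearEquiv.ofInjective_apply ι (h := hι) ((LinearEquiv.ofInjective ι hι).symm y)
    rw [LinearEquiv.apply_symm_apply] at h2
    exact h2.symm
  have hιρ : ∀ e, ι (ρ e) = e - s (τ e) := by
    intro e
    exact key ⟨e - s (τ e), hmem e⟩
  refine ⟨ρ, LinearMap.ext fun b => ?_, hιρ⟩
  apply hι
  rw [LinearMap.comp_apply, hιρ]
  have hτι : τ (ι b) = 0 := by
    have : ι b ∈ ker τ := hr ▸ LinearMap.mem_range_self ι b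
    exact this
  simp [hτι]

/-- trivial vanishing when the second argument is injective. -/
theorem ext1Zero_of_injective {A B : Type} [AddCommGroup A] [Module R A]
    [AddCommGroup B] [Module R B] (hB : Module.Injective R B) : Ext1Zero R A B := by
  intro E _ _ ι τ hι hτ hr
  obtain ⟨ρ, hρ⟩ := hB.out ι hι LinearMap.id
  exact sec_of_retr ι τ hτ hr ρ (LinearMap.ext hρ)


/-- If `Ext¹(A, C) = 0` and `σ : F ↠ A`, then every map `ker σ → C` extends to `F`. -/
theorem ext_from_ker {F A C : Type} [AddCommGroup F] [Module R F] [AddCommGroup A] [Module R A]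
    [AddCommGroup C] [Module R C] (hE : Ext1Zero R A C)
    (σ : F →ₗ[R] A) (hσ : Function.Surjective σ) (h : ↥(ker σ) →ₗ[R] C) :
    ∃ H : F →ₗ[R] C, ∀ k : ↥(ker σ), H k = h k := by
  classical
  set θ : ↥(ker σ) →ₗ[R] F × C := LinearMap.prod (ker σ).subtype (-h) with hθ
  set N : Submodule R (F × C) := range θ with hN
  set ι : C →ₗ[R] ((F × C) ⧸ N) := N.mkQ ∘ₗ LinearMap.inr R F C with hι'
  have hNker : N ≤ ker (σ ∘ₗ LinearMap.fst R F C) := by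
    rintro _ ⟨k, rfl⟩
    simp only [LinearMap.mem_ker, LinearMap.comp_apply, hθ, LinearMap.prod_apply,
      Pi.prod, LinearMap.fst_apply]
    exact k.2
  set τ : ((F × C) ⧸ N) →ₗ[R] A := N.liftQ (σ ∘ₗ LinearMap.fst R F C) hNker with hτ'
  have hτmk : ∀ x : F × C, τ (Submodule.Quotient.mk x) = σ x.1 := by
    intro x; simp [hτ']
  have hιmk : ∀ c : C, ι c = Submodule.Quotient.mk ((0 : F), c) := fun c => rfl
  have hτ : Function.Surjective τ := by
    intro a
    obtain ⟨x, hx⟩ := hσ a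
    exact ⟨Submodule.Quotient.mk (x, 0), by rw [hτmk]; exact hx⟩
  have hmkeq : ∀ (k : ↥(ker σ)) (c : C), (Submodule.Quotient.mk ((k : F), c) :
      (F × C) ⧸ N) = ι (c + h k) := by
    intro k c
    rw [hιmk, Submodule.Quotient.eq]
    refine ⟨k, ?_⟩
    simp only [hθ, LinearMap.prod_apply, Pi.prod, LinearMap.neg_apply]
    ext <;> simp
  have hι : Function.Injective ι := by
    rw [← LinearMap.ker_eq_bot]
    apply (Submodule.eq_bot_iff _).2
    intro c hc
    have hc' : ι c = 0 := hc
    rw [hιmk] at hc'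
    have : ((0 : F), c) ∈ N := (Submodule.Quotient.mk_eq_zero N).1 hc'
    obtain ⟨k, hk⟩ := this
    have h1 : (k : F) = 0 := congrArg Prod.fst hk
    have h0 : k = 0 := Subtype.ext h1
    have h2 : -h k = c := congrArg Prod.snd hk
    rw [h0] at h2
    simpa using h2.symm
  have hr : range ι = ker τ := by
    apply le_antisymm
    · rintro _ ⟨c, rfl⟩
      rw [LinearMap.mem_ker, hιmk, hτmk]
      simp
    · rintro x hx
      obtain ⟨⟨f, c⟩, rfl⟩ := Submodule.mkQ_surjective N x
      rw [LinearMap.mem_ker] at hx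
      rw [Submodule.mkQ_apply, hτmk] at hx
      have hf : f ∈ ker σ := hx
      rw [Submodule.mkQ_apply, hmkeq ⟨f, hf⟩ c]
      exact LinearMap.mem_range_self ι _
  obtain ⟨s, hs⟩ := hE ((F × C) ⧸ N) ι τ hι hτ hr
  obtain ⟨ρ, hρ1, _⟩ := retr_of_sec ι τ hι hr s hs
  refine ⟨ρ ∘ₗ N.mkQ ∘ₗ LinearMap.inl R F C, fun k => ?_⟩
  have : (Submodule.Quotient.mk ((k : F), (0 : C)) : (F × C) ⧸ N) = ι (h k) := by
    rw [hmkeq k 0, zero_add]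
  simp only [LinearMap.comp_apply, LinearMap.inl_apply, Submodule.mkQ_apply]
  rw [this]
  exact LinearMap.congr_fun hρ1 (h k)

/-- If `Ext¹(K, B) = 0`, maps `K → C` lift through any surjection with kernel `B`. -/
theorem lift_of_ext1Zero {K B J C : Type} [AddCommGroup K] [Module R K] [AddCommGroup B]
    [Module R B] [AddCommGroup J] [Module R J] [AddCommGroup C] [Module R C]
    (ιB : B →ₗ[R] J) (πJ : J →ₗ[R] C)
    (hιB : Function.Injective ιB) (hπJ : Function.Surjective πJ) (hrB : range ιB = ker πJ)
    (hE : Ext1Zero R K B) (w : K →ₗ[R] C) : ∃ wt : K →ₗ[R] J, πJ ∘ₗ wt = w := by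
  set d : K × J →ₗ[R] C := w ∘ₗ LinearMap.fst R K J - πJ ∘ₗ LinearMap.snd R K J with hd
  have hdmem : ∀ p : K × J, p ∈ ker d ↔ w p.1 = πJ p.2 := by
    intro p
    rw [LinearMap.mem_ker, hd]
    simp only [LinearMap.sub_apply, LinearMap.comp_apply, LinearMap.fst_apply,
      LinearMap.snd_apply]
    exact sub_eq_zero
  set τ : ↥(ker d) →ₗ[R] K := LinearMap.fst R K J ∘ₗ (ker d).subtype with hτ'
  have hinr : ∀ b : B, ((0 : K), ιB b) ∈ ker d := by
    intro b
    rw [hdmem]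
    have : ιB b ∈ ker πJ := hrB ▸ LinearMap.mem_range_self ιB b
    simp [LinearMap.mem_ker.mp this]
  set ι : B →ₗ[R] ↥(ker d) :=
    LinearMap.codRestrict (ker d) (LinearMap.inr R K J ∘ₗ ιB) hinr with hι'
  have hι : Function.Injective ι := by
    intro b b' hb
    have := congrArg (fun x : ↥(ker d) => (x : K × J).2) hb
    exact hιB this
  have hτ : Function.Surjective τ := by
    intro k
    obtain ⟨j, hj⟩ := hπJ (w k)
    exact ⟨⟨(k, j), (hdmem _).2 hj.symm⟩, rfl⟩
  have hr : range ι = ker τ := by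
    apply le_antisymm
    · rintro _ ⟨b, rfl⟩
      rfl
    · rintro ⟨⟨k, j⟩, hkj⟩ hker
      have hk : k = 0 := hker
      subst hk
      have : πJ j = 0 := by
        have := (hdmem _).1 hkj
        simpa using this.symm
      have : j ∈ range ιB := hrB ▸ LinearMap.mem_ker.2 this
      obtain ⟨b, rfl⟩ := this
      exact ⟨b, rfl⟩
  obtain ⟨s, hs⟩ := hE ↥(ker d) ι τ hι hτ hr
  refine ⟨(LinearMap.snd R K J ∘ₗ (ker d).subtype) ∘ₗ s, LinearMap.ext fun k => ?_⟩
  have h1 : ((s k : K × J)).1 = k := LinearMap.congr_fun hs k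
  have h2 := (hdmem (s k : K × J)).1 (s k).2
  rw [h1] at h2
  simpa using h2.symm

/-- Dimension shift, downward: `Ext¹(A,C) = 0 → Ext¹(Ω A, B) = 0` where
`Ω A = ker σ` and `C = J ⧸ B` with `J` injective. -/
theorem shift_down {A F B J C : Type} [AddCommGroup A] [Module R A] [AddCommGroup F] [Module R F]
    [AddCommGroup B] [Module R B] [AddCommGroup J] [Module R J] [AddCommGroup C] [Module R C]
    (σ : F →ₗ[R] A) (hσ : Function.Surjective σ) (hF : Module.Projective R F)
    (ιB : B →ₗ[R] J) (πJ : J →ₗ[R] C) (hιB : Function.Injective ιB)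
    (hπJ : Function.Surjective πJ) (hrB : range ιB = ker πJ) (hJ : Module.Injective R J)
    (hAC : Ext1Zero R A C) : Ext1Zero R ↥(ker σ) B := by
  intro E _ _ ι τ hι hτ hr
  haveI := hF
  obtain ⟨e, he⟩ := hJ.out ι hι ιB
  have hkerle : ker τ ≤ ker (πJ ∘ₗ e) := by
    intro x hx
    have hx' : x ∈ range ι := hr ▸ hx
    obtain ⟨b, rfl⟩ := hx'
    have : πJ (ιB b) = 0 := by
      have : ιB b ∈ ker πJ := hrB ▸ LinearMap.mem_range_self ιB b
      exact this
    simp [LinearMap.mem_ker, he b, this]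
  obtain ⟨h, hh⟩ := ausDesc τ hτ (πJ ∘ₗ e) hkerle
  obtain ⟨H, hH⟩ := ext_from_ker hAC σ hσ h
  obtain ⟨Ht, hHt⟩ := Module.projective_lifting_property πJ H hπJ
  set u : E →ₗ[R] J := e - (Ht ∘ₗ (ker σ).subtype) ∘ₗ τ with hu'
  have hu : ∀ x, u x ∈ range ιB := by
    intro x
    rw [hrB, LinearMap.mem_ker]
    have h1 : πJ (e x) = h (τ x) := (LinearMap.congr_fun hh x).symm
    have h2 : πJ (Ht ((τ x : F))) = H ((τ x : F)) := LinearMap.congr_fun hHt _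
    simp only [hu', LinearMap.sub_apply, LinearMap.comp_apply, Submodule.coe_subtype, map_sub]
    rw [h1, h2, hH (τ x), sub_self]
  set r : E →ₗ[R] B :=
    ((LinearEquiv.ofInjective ιB hιB).symm : ↥(range ιB) →ₗ[R] B) ∘ₗ
      LinearMap.codRestrict (range ιB) u hu with hrdef
  have hkey : ∀ y : ↥(range ιB), ιB ((LinearEquiv.ofInjective ιB hιB).symm y) = (y : J) := by
    intro y
    have h2 := LinearEquiv.ofInjective_apply ιB (h := hιB) ((LinearEquiv.ofInjective ιB hιB).symm y)
    rw [LinearEquiv.apply_symm_apply] at h2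
    exact h2.symm
  have hιBr : ∀ x, ιB (r x) = u x := by
    intro x
    exact hkey ⟨u x, hu x⟩
  have hrι : r ∘ₗ ι = LinearMap.id := by
    refine LinearMap.ext fun b => ?_
    apply hιB
    rw [LinearMap.comp_apply, hιBr]
    have hτι : τ (ι b) = 0 := by
      have : ι b ∈ ker τ := hr ▸ LinearMap.mem_range_self ι b
      exact this
    simp [hu', hτι, he b]
  exact sec_of_retr ι τ hτ hr r hrι

/-- Dimension shift, upward: `Ext¹(Ω A, B) = 0 → Ext¹(A, C) = 0`. -/
theorem shift_up {A F B J C : Type} [AddCommGroup A] [Module R A] [AddCommGroup F] [Module R F]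
    [AddCommGroup B] [Module R B] [AddCommGroup J] [Module R J] [AddCommGroup C] [Module R C]
    (σ : F →ₗ[R] A) (hσ : Function.Surjective σ) (hF : Module.Projective R F)
    (ιB : B →ₗ[R] J) (πJ : J →ₗ[R] C) (hιB : Function.Injective ιB)
    (hπJ : Function.Surjective πJ) (hrB : range ιB = ker πJ) (hJ : Module.Injective R J)
    (hKB : Ext1Zero R ↥(ker σ) B) : Ext1Zero R A C := by
  intro E _ _ ι τ hι hτ hr
  haveI := hF
  obtain ⟨v, hv⟩ := Module.projective_lifting_property τ σ hτ
  have hvk : ∀ k : ↥(ker σ), v k ∈ range ι := by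
    intro k
    rw [hr, LinearMap.mem_ker]
    have : τ (v (k : F)) = σ (k : F) := LinearMap.congr_fun hv (k : F)
    rw [this]
    exact k.2
  set w : ↥(ker σ) →ₗ[R] C :=
    ((LinearEquiv.ofInjective ι hι).symm : ↥(range ι) →ₗ[R] C) ∘ₗ
      LinearMap.codRestrict (range ι) (v ∘ₗ (ker σ).subtype) (fun k => hvk k) with hw'
  have hkey : ∀ y : ↥(range ι), ι ((LinearEquiv.ofInjective ι hι).symm y) = (y : E) := by
    intro y
    have h2 := LinearEquiv.ofInjective_apply ι (h := hι) ((LinearEquiv.ofInjective ι hι).symm y)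
    rw [LinearEquiv.apply_symm_apply] at h2
    exact h2.symm
  have hιw : ∀ k : ↥(ker σ), ι (w k) = v k := by
    intro k
    exact hkey ⟨v k, hvk k⟩
  obtain ⟨wt, hwt⟩ := lift_of_ext1Zero ιB πJ hιB hπJ hrB hKB w
  obtain ⟨W, hW⟩ := hJ.out (ker σ).subtype (Submodule.injective_subtype _) wt
  set v' : F →ₗ[R] E := v - ι ∘ₗ πJ ∘ₗ W with hv''
  have hker : ker σ ≤ ker v' := by
    intro x hx
    have hW' : W x = wt ⟨x, hx⟩ := hW ⟨x, hx⟩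
    have hπwt : πJ (wt ⟨x, hx⟩) = w ⟨x, hx⟩ := LinearMap.congr_fun hwt _
    simp only [LinearMap.mem_ker, hv'', LinearMap.sub_apply, LinearMap.comp_apply]
    rw [hW', hπwt, hιw ⟨x, hx⟩, sub_self]
  obtain ⟨s, hs⟩ := ausDesc σ hσ v' hker
  refine ⟨s, LinearMap.ext fun a => ?_⟩
  obtain ⟨x, rfl⟩ := hσ a
  have h1 : s (σ x) = v' x := LinearMap.congr_fun hs x
  have hτι : ∀ c, τ (ι c) = 0 := by
    intro c
    have : ι c ∈ ker τ := hr ▸ LinearMap.mem_range_self ι c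
    exact this
  simp only [LinearMap.comp_apply, LinearMap.id_apply]
  rw [h1, hv'']
  simp only [LinearMap.sub_apply, LinearMap.comp_apply, map_sub]
  rw [hτι, sub_zero]
  exact LinearMap.congr_fun hv x

/-- Every module embeds into an injective module. -/
theorem exists_injective_embedding (B : Type) [AddCommGroup B] [Module R B] :
    ∃ (J : Type) (_ : AddCommGroup J) (_ : Module R J) (ιB : B →ₗ[R] J),
      Module.Injective R J ∧ Function.Injective ιB := by
  let X : ModuleCat R := ModuleCat.of R B
  let J : ModuleCat R := CategoryTheory.Injective.under X
  haveI : CategoryTheory.Injective (ModuleCat.of R J) := by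
    have : ModuleCat.of R J = J := rfl
    rw [this]
    infer_instance
  refine ⟨J, inferInstance, inferInstance, (CategoryTheory.Injective.ι X).hom,
    Module.injective_module_of_injective_object R J, ?_⟩
  exact (ModuleCat.mono_iff_injective (CategoryTheory.Injective.ι X)).1 inferInstance


end AuslanderAux

/-- `projDimLE R n M` says the `R`-module `M` has projective dimension at most
`n`. -/
def projDimLE (R : Type) [CommRing R] :
    ℕ → (M : Type) → [AddCommGroup M] → [Module R M] → Prop
  | 0, M, _, _ => Module.Projective R M
  | n + 1, M, _, _ => ∃ (P : Type) (_ : AddCommGroup P) (_ : Module R P),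
      Module.Projective R P ∧ ∃ f : P →ₗ[R] M, Function.Surjective f ∧
        projDimLE R n (LinearMap.ker f)

/-- The global dimension of `R` is at most `n` if every `R`-module has
projective dimension at most `n`. -/
def globalDimLE (R : Type) [CommRing R] (n : ℕ) : Prop :=
  ∀ (M : Type) [AddCommGroup M] [Module R M], projDimLE R n M

set_option maxHeartbeats 2000000 in
/-- Auslander's theorem, special case: if every cyclic module `R ⧸ I` over a
commutative ring `R` has projective dimension at most `2`, then the global
dimension of `R` is at most `2`. -/
theorem globalDim_le_two_of_cyclic (R : Type) [CommRing R]
    (hcyc : ∀ I : Ideal R, projDimLE R 2 (R ⧸ I)) :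
    globalDimLE R 2 := by
  intro M _ _
  let f0 : (M →₀ R) →ₗ[R] M := Finsupp.linearCombination R (_root_.id)
  have hf0 : Function.Surjective f0 := fun m => ⟨Finsupp.single m 1, by simp [f0]⟩
  let f1 : (↥(LinearMap.ker f0) →₀ R) →ₗ[R] ↥(LinearMap.ker f0) :=
    Finsupp.linearCombination R (_root_.id)
  have hf1 : Function.Surjective f1 := fun m => ⟨Finsupp.single m 1, by simp [f1]⟩
  have claim : ∀ (B : Type) (_bi : AddCommGroup B) (_mi : Module R B),
      Ext1Zero R ↥(LinearMap.ker f1) B := by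
    intro B _ _
    obtain ⟨I0, _, _, ιB, hI0, hιB⟩ := exists_injective_embedding (R := R) B
    obtain ⟨I1, _, _, ι1, hI1, hι1⟩ :=
      exists_injective_embedding (R := R) (I0 ⧸ LinearMap.range ιB)
    have hrB : LinearMap.range ιB = LinearMap.ker (LinearMap.range ιB).mkQ :=
      (Submodule.ker_mkQ _).symm
    have hr1 : LinearMap.range ι1 = LinearMap.ker (LinearMap.range ι1).mkQ :=
      (Submodule.ker_mkQ _).symm
    have hC2 : Module.Injective R (I1 ⧸ LinearMap.range ι1) := by
      apply Module.Baer.injective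
      intro I f
      have h2 : ∃ (P : Type) (_ : AddCommGroup P) (_ : Module R P),
          Module.Projective R P ∧ ∃ p0 : P →ₗ[R] (R ⧸ I), Function.Surjective p0 ∧
          ∃ (Q : Type) (_ : AddCommGroup Q) (_ : Module R Q),
          Module.Projective R Q ∧ ∃ p1 : Q →ₗ[R] ↥(LinearMap.ker p0),
          Function.Surjective p1 ∧ Module.Projective R ↥(LinearMap.ker p1) := hcyc I
      obtain ⟨P0, _, _, hP0, p0, hp0, P1, _, _, hP1, p1, hp1, hK2'⟩ := h2
      have E1 : Ext1Zero R ↥(LinearMap.ker p1) B := ext1Zero_of_projective hK2'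
      have E2 : Ext1Zero R ↥(LinearMap.ker p0) (I0 ⧸ LinearMap.range ιB) :=
        shift_up p1 hp1 hP1 ιB (LinearMap.range ιB).mkQ hιB
          (Submodule.mkQ_surjective _) hrB hI0 E1
      have E3 : Ext1Zero R (R ⧸ I) (I1 ⧸ LinearMap.range ι1) :=
        shift_up p0 hp0 hP0 ι1 (LinearMap.range ι1).mkQ hι1
          (Submodule.mkQ_surjective _) hr1 hI1 E2
      obtain ⟨H, hH⟩ := ext_from_ker E3 I.mkQ (Submodule.mkQ_surjective I)
        (f ∘ₗ (LinearEquiv.ofEq (LinearMap.ker I.mkQ) I (Submodule.ker_mkQ I) :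
          ↥(LinearMap.ker I.mkQ) →ₗ[R] ↥I))
      refine ⟨H, fun x hx => ?_⟩
      have hx' : x ∈ LinearMap.ker I.mkQ := by rw [Submodule.ker_mkQ]; exact hx
      exact hH ⟨x, hx'⟩
    have EM : Ext1Zero R M (I1 ⧸ LinearMap.range ι1) := ext1Zero_of_injective hC2
    have EK1 : Ext1Zero R ↥(LinearMap.ker f0) (I0 ⧸ LinearMap.range ιB) :=
      shift_down f0 hf0 inferInstance ι1 (LinearMap.range ι1).mkQ hι1
        (Submodule.mkQ_surjective _) hr1 hI1 EM
    exact @shift_down R _ ↥(LinearMap.ker f0) (↥(LinearMap.ker f0) →₀ R) B I0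
      (I0 ⧸ LinearMap.range ιB) _ _ _ _ _ _ _ _ _ _ f1 hf1 inferInstance ιB (LinearMap.range ιB).mkQ hιB
      (Submodule.mkQ_surjective _) hrB hI0 EK1
  have hK2 : Module.Projective R ↥(LinearMap.ker f1) := by
    let f2 : (↥(LinearMap.ker f1) →₀ R) →ₗ[R] ↥(LinearMap.ker f1) :=
      Finsupp.linearCombination R (_root_.id)
    have hf2 : Function.Surjective f2 := fun m => ⟨Finsupp.single m 1, by simp [f2]⟩
    obtain ⟨s, hs⟩ := claim ↥(LinearMap.ker f2) inferInstance inferInstance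
      (↥(LinearMap.ker f1) →₀ R) (LinearMap.ker f2).subtype f2
      (Submodule.injective_subtype _) hf2
      (by rw [Submodule.range_subtype])
    exact Module.Projective.of_split s f2 hs
  show ∃ (P : Type) (_ : AddCommGroup P) (_ : Module R P),
      Module.Projective R P ∧ ∃ f : P →ₗ[R] M, Function.Surjective f ∧
      ∃ (Q : Type) (_ : AddCommGroup Q) (_ : Module R Q),
      Module.Projective R Q ∧ ∃ g : Q →ₗ[R] ↥(LinearMap.ker f),
      Function.Surjective g ∧ Module.Projective R ↥(LinearMap.ker g)
  exact ⟨M →₀ R, inferInstance, inferInstance, inferInstance, f0, hf0,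
    ↥(LinearMap.ker f0) →₀ R, inferInstance, inferInstance, inferInstance, f1, hf1, hK2⟩
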